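/- arXiv:2402.16783 — 2 statements merged into one kernel-verified Lean document; each statement's English description precedes it below -/
import Mathlib

section
/- Let m ≥ 3, r > 0, c_j = 2(j−1)r sin(π/m) for 1 ≤ j ≤ m+1, and let Q be the uniform distribution on [0, 2mr sin(π/m)]. Let k ≥ 1, 0 < q < m, and n = mk + 1 + q. Then the n-th conditional unconstrained quantization error for Q with respect to the conditional set β = {c_j : 1 ≤ j ≤ m+1} equals r² q sin²(π/m)/(3m(k+1)²) + r²(m−q) sin²(π/m)/(3mk²), and this infimum is attained by the set γ_n = ( ⋃_{j=1}^{q} { c_j + 2(i−1)r sin(π/m)/(k+1) : 1 ≤ i ≤ k+2 } ) ∪ ( ⋃_{j=q+1}^{m} { c_j + 2(i−1)r sin(π/m)/k : 1 ≤ i ≤ k+1 } ). -/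
open MeasureTheory Set Filter
open intervalIntegral

/-- The uniform distribution on `[a, b]`: normalized Lebesgue measure restricted to `[a, b]`. -/
noncomputable def uniformOn (a b : ℝ) : Measure ℝ :=
  (ENNReal.ofReal (b - a))⁻¹ • volume.restrict (Set.Icc a b)

/-- The distortion error of a set `s` of points for the measure `P`. -/
noncomputable def distortion (P : Measure ℝ) (s : Set ℝ) : ℝ :=
  ∫ x, sInf ((fun a => (x - a) ^ 2) '' s) ∂P

/-- The `n`-th conditional (unconstrained) quantization error for `P` with respect to
the conditional set `β`. -/
noncomputable def condQuantError (P : Measure ℝ) (β : Set ℝ) (n : ℕ) : ℝ :=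
  sInf { v : ℝ | ∃ α : Set ℝ, α.Finite ∧ α.ncard ≤ n - β.ncard ∧ v = distortion P (α ∪ β) }

noncomputable def err (S : Set ℝ) (x : ℝ) : ℝ := sInf ((fun a => (x - a) ^ 2) '' S)

lemma err_bddBelow (S : Set ℝ) (x : ℝ) : BddBelow ((fun a => (x - a) ^ 2) '' S) :=
  ⟨0, fun y ⟨a, _, ha⟩ => ha ▸ sq_nonneg _⟩

lemma err_le (S : Set ℝ) (x a : ℝ) (ha : a ∈ S) : err S x ≤ (x - a) ^ 2 :=
  csInf_le (err_bddBelow S x) ⟨a, ha, rfl⟩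

lemma le_err (S : Set ℝ) (hS : S.Nonempty) (x v : ℝ) (h : ∀ a ∈ S, v ≤ (x - a) ^ 2) :
    v ≤ err S x :=
  le_csInf (hS.image _) (fun y ⟨a, ha, hay⟩ => hay ▸ h a ha)

lemma err_nonneg (S : Set ℝ) (hS : S.Nonempty) (x : ℝ) : 0 ≤ err S x :=
  le_err S hS x 0 (fun a _ => sq_nonneg _)

lemma err_eq_inf' (s : Finset ℝ) (hs : s.Nonempty) (x : ℝ) :
    err ↑s x = s.inf' hs (fun a => (x - a) ^ 2) := by
  rw [err, ← Finset.inf'_eq_csInf_image s hs]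

lemma continuous_err (s : Finset ℝ) (hs : s.Nonempty) : Continuous (err ↑s) := by
  have : Continuous (fun x => s.inf' hs (fun a => (x - a) ^ 2)) := by
    apply continuous_iff_continuousAt.2
    intro x
    exact ContinuousAt.finset_inf'_apply hs (fun i _ => (by fun_prop : Continuous (fun x : ℝ => (x - i)^2)).continuousAt)
  convert this using 1
  ext x; exact err_eq_inf' s hs x

lemma intervalIntegrable_err (s : Finset ℝ) (hs : s.Nonempty) (a b : ℝ) :
    IntervalIntegrable (err ↑s) volume a b :=
  (continuous_err s hs).intervalIntegrable a b

/-- On a gap `[p, p']` where no point of `S` lies strictly inside,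
the error is the min of distances squared to the two endpoints. -/
lemma err_gap (S : Set ℝ) (p p' : ℝ) (hp : p ∈ S) (hp' : p' ∈ S)
    (hsep : ∀ a ∈ S, a ≤ p ∨ p' ≤ a) (x : ℝ) (hx : x ∈ Icc p p') :
    err S x = min ((x - p) ^ 2) ((p' - x) ^ 2) := by
  obtain ⟨hx1, hx2⟩ := hx
  apply le_antisymm
  · apply le_min (err_le S x p hp)
    have : (x - p') ^ 2 = (p' - x) ^ 2 := by ring
    exact this ▸ err_le S x p' hp'
  · apply le_err S ⟨p, hp⟩ x
    intro a ha
    rcases hsep a ha with h | h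
    · exact le_trans (min_le_left _ _) (by nlinarith)
    · exact le_trans (min_le_right _ _) (by nlinarith)

lemma integral_min_sq (p p' : ℝ) (h : p ≤ p') :
    ∫ x in p..p', min ((x - p) ^ 2) ((p' - x) ^ 2) = (p' - p) ^ 3 / 12 := by
  set μ := (p + p') / 2 with hμ
  have hpμ : p ≤ μ := by simp [hμ]; linarith
  have hμp' : μ ≤ p' := by simp [hμ]; linarith
  have hint : ∀ a b : ℝ, IntervalIntegrable (fun x => min ((x - p) ^ 2) ((p' - x) ^ 2)) volume a b := by
    intro a b
    exact (Continuous.min (by fun_prop) (by fun_prop)).intervalIntegrable a b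
  rw [← integral_add_adjacent_intervals (hint p μ) (hint μ p')]
  have h1 : ∫ x in p..μ, min ((x - p) ^ 2) ((p' - x) ^ 2) = ∫ x in p..μ, (x - p) ^ 2 := by
    apply integral_congr
    intro x hx
    rw [uIcc_of_le hpμ] at hx
    obtain ⟨h1, h2⟩ := hx
    apply min_eq_left
    have : x - p ≤ p' - x := by simp [hμ] at h2; linarith
    nlinarith
  have h2 : ∫ x in μ..p', min ((x - p) ^ 2) ((p' - x) ^ 2) = ∫ x in μ..p', (p' - x) ^ 2 := by
    apply integral_congr
    intro x hx
    rw [uIcc_of_le hμp'] at hx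
    obtain ⟨h1, h2⟩ := hx
    apply min_eq_right
    have : p' - x ≤ x - p := by simp [hμ] at h1; linarith
    nlinarith
  have e1 : ∫ x in p..μ, (x - p) ^ 2 = (μ - p) ^ 3 / 3 := by
    have := intervalIntegral.integral_comp_sub_right (fun x => x ^ 2) p (a := p) (b := μ)
    rw [this, sub_self, integral_pow]
    ring
  have e2 : ∫ x in μ..p', (p' - x) ^ 2 = (p' - μ) ^ 3 / 3 := by
    have := intervalIntegral.integral_comp_sub_left (fun x => x ^ 2) p' (a := μ) (b := p')
    rw [this, sub_self, integral_pow]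
    ring
  rw [h1, h2, e1, e2]
  have : μ - p = (p' - p)/2 := by rw [hμ]; ring
  rw [this]
  have : p' - μ = (p' - p)/2 := by rw [hμ]; ring
  rw [this]
  ring

lemma integral_err_gap (s : Finset ℝ) (p p' : ℝ) (hp : p ∈ s) (hp' : p' ∈ s) (hle : p ≤ p')
    (hsep : ∀ a ∈ s, a ≤ p ∨ p' ≤ a) :
    ∫ x in p..p', err ↑s x = (p' - p) ^ 3 / 12 := by
  rw [← integral_min_sq p p' hle]
  apply integral_congr
  intro x hx
  rw [uIcc_of_le hle] at hx
  exact err_gap ↑s p p' hp hp' hsep x hx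

lemma cube_split (a b τ : ℝ) (ha : 0 ≤ a) (hb : 0 ≤ b) (hτ : 1 ≤ τ) :
    (a + b) ^ 3 / (12 * (τ + 1) ^ 2) ≤ a ^ 3 / 12 + b ^ 3 / (12 * τ ^ 2) := by
  have hτ0 : (0:ℝ) < τ := by linarith
  have e : a ^ 3 / 12 + b ^ 3 / (12 * τ ^ 2) - (a + b) ^ 3 / (12 * (τ + 1) ^ 2)
      = ((b - τ * a) ^ 2 * ((2 * τ + 1) * b + τ * (τ + 2) * a)) / (12 * τ ^ 2 * (τ + 1) ^ 2) := by
    field_simp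
    ring
  nlinarith [div_nonneg (mul_nonneg (sq_nonneg (b - τ * a))
    (by nlinarith : (0:ℝ) ≤ (2 * τ + 1) * b + τ * (τ + 2) * a))
    (by positivity : (0:ℝ) ≤ 12 * τ ^ 2 * (τ + 1) ^ 2)]

/-- Lower bound for the error integral over `[u,v]` with `u, v ∈ s` and `t` points of `s`
strictly inside. -/
lemma integral_err_lb (t : ℕ) : ∀ (s : Finset ℝ) (u v : ℝ), u ∈ s → v ∈ s → u ≤ v →
    (s.filter (fun a => a ∈ Ioo u v)).card = t →
    (v - u) ^ 3 / (12 * ((t : ℝ) + 1) ^ 2) ≤ ∫ x in u..v, err ↑s x := by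
  induction t with
  | zero =>
    intro s u v hu hv huv hcard
    have hsep : ∀ a ∈ s, a ≤ u ∨ v ≤ a := by
      intro a ha
      by_contra hcon
      push_neg at hcon
      have : a ∈ s.filter (fun a => a ∈ Ioo u v) :=
        Finset.mem_filter.2 ⟨ha, hcon.1, hcon.2⟩
      rw [Finset.card_eq_zero.1 hcard] at this
      exact absurd this (Finset.notMem_empty a)
    rw [integral_err_gap s u v hu hv huv hsep]
    simp
  | succ t ih =>
    intro s u v hu hv huv hcard
    set T := s.filter (fun a => a ∈ Ioo u v) with hT
    have hTne : T.Nonempty := Finset.card_pos.1 (by rw [hcard]; omega)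
    set w := T.min' hTne with hw
    have hwT : w ∈ T := T.min'_mem hTne
    have hws : w ∈ s := (Finset.mem_filter.1 hwT).1
    have hwIoo : w ∈ Ioo u v := (Finset.mem_filter.1 hwT).2
    have hmin : ∀ a ∈ T, w ≤ a := fun a ha => T.min'_le a ha
    have huw : u ≤ w := hwIoo.1.le
    have hwv : w ≤ v := hwIoo.2.le
    -- no points strictly between u and w
    have hsep : ∀ a ∈ s, a ≤ u ∨ w ≤ a := by
      intro a ha
      by_contra hcon
      push_neg at hcon
      have haT : a ∈ T := Finset.mem_filter.2 ⟨ha, hcon.1, lt_trans hcon.2 hwIoo.2⟩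
      exact absurd (hmin a haT) (not_le.2 hcon.2)
    -- points strictly between w and v: T.erase w
    have hfe : s.filter (fun a => a ∈ Ioo w v) = T.erase w := by
      ext a
      simp only [Finset.mem_filter, Finset.mem_erase, hT, mem_Ioo]
      constructor
      · rintro ⟨ha, h1, h2⟩
        exact ⟨ne_of_gt h1, ha, lt_trans hwIoo.1 h1, h2⟩
      · rintro ⟨hne, ha, h1, h2⟩
        refine ⟨ha, ?_, h2⟩
        exact lt_of_le_of_ne (hmin a (Finset.mem_filter.2 ⟨ha, h1, h2⟩)) (Ne.symm hne)
    have hcard' : (s.filter (fun a => a ∈ Ioo w v)).card = t := by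
      rw [hfe, Finset.card_erase_of_mem hwT, hcard]
      omega
    have hne : s.Nonempty := ⟨u, hu⟩
    rw [← integral_add_adjacent_intervals (intervalIntegrable_err s hne u w)
      (intervalIntegrable_err s hne w v)]
    have h1 : ∫ x in u..w, err ↑s x = (w - u) ^ 3 / 12 :=
      integral_err_gap s u w hu hws huw hsep
    have h2 := ih s w v hws hv hwv hcard'
    have key := cube_split (w - u) (v - w) ((t : ℝ) + 1) (by linarith) (by linarith)
      (by linarith [Nat.cast_nonneg (α := ℝ) t])
    push_cast
    push_cast at h2
    rw [h1]
    have : v - u = (w - u) + (v - w) := by ring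
    rw [this]
    calc ((w - u) + (v - w)) ^ 3 / (12 * ((t:ℝ) + 1 + 1) ^ 2)
        ≤ (w - u) ^ 3 / 12 + (v - w) ^ 3 / (12 * ((t:ℝ) + 1) ^ 2) := key
      _ ≤ (w - u) ^ 3 / 12 + ∫ x in w..v, err ↑s x := by linarith

lemma alloc_pointwise (k t : ℕ) (hk : 1 ≤ k) :
    1 / (k : ℝ) ^ 2 - (1 / (k : ℝ) ^ 2 - 1 / ((k : ℝ) + 1) ^ 2) * ((t : ℝ) - ((k : ℝ) - 1))
      ≤ 1 / ((t : ℝ) + 1) ^ 2 := by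
  have hK : (1:ℝ) ≤ (k : ℝ) := by exact_mod_cast hk
  have hu : (1:ℝ) ≤ (t : ℝ) + 1 := by have := Nat.cast_nonneg (α := ℝ) t; linarith
  set K := (k : ℝ) with hKdef
  set u := (t : ℝ) + 1 with hudef
  have hK0 : (0:ℝ) < K := by linarith
  have hu0 : (0:ℝ) < u := by linarith
  have hts : (t : ℝ) - (K - 1) = u - K := by rw [hudef]; ring
  rw [hts]
  have e : 1 / u ^ 2 - (1 / K ^ 2 - (1 / K ^ 2 - 1 / (K + 1) ^ 2) * (u - K))
      = ((u - K) * (u - (K + 1)) * ((2 * K + 1) * u + K * (K + 1))) / (u ^ 2 * K ^ 2 * (K + 1) ^ 2) := by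
    field_simp
    ring
  have hcase : u ≤ K ∨ K + 1 ≤ u := by
    rcases Nat.lt_or_ge t k with h | h
    · left; rw [hudef, hKdef]; exact_mod_cast Nat.succ_le_of_lt h
    · right; rw [hudef, hKdef]
      have : (k:ℝ) ≤ (t:ℝ) := by exact_mod_cast h
      linarith
  have hpos : (0:ℝ) < (2 * K + 1) * u + K * (K + 1) := by positivity
  have hnum : 0 ≤ (u - K) * (u - (K + 1)) * ((2 * K + 1) * u + K * (K + 1)) := by
    rcases hcase with h | h
    · have h1 : u - K ≤ 0 := by linarith
      have h2 : u - (K + 1) ≤ 0 := by linarith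
      have h3 : 0 ≤ (u - K) * (u - (K + 1)) := by nlinarith
      exact mul_nonneg h3 hpos.le
    · have h1 : 0 ≤ u - K := by linarith
      have h2 : 0 ≤ u - (K + 1) := by linarith
      exact mul_nonneg (mul_nonneg h1 h2) hpos.le
  have : 0 ≤ ((u - K) * (u - (K + 1)) * ((2 * K + 1) * u + K * (K + 1))) / (u ^ 2 * K ^ 2 * (K + 1) ^ 2) := by
    apply div_nonneg hnum; positivity
  linarith

lemma alloc_sum (m k q : ℕ) (hk : 1 ≤ k) (hq : q ≤ m) (t : ℕ → ℕ)
    (hsum : ∑ j ∈ Finset.range m, t j ≤ m * (k - 1) + q) :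
    (q : ℝ) / ((k : ℝ) + 1) ^ 2 + ((m : ℝ) - (q : ℝ)) / (k : ℝ) ^ 2
      ≤ ∑ j ∈ Finset.range m, 1 / ((t j : ℝ) + 1) ^ 2 := by
  have hK : (1:ℝ) ≤ (k:ℝ) := by exact_mod_cast hk
  set K := (k : ℝ)
  set b := 1 / K ^ 2 - 1 / (K + 1) ^ 2 with hbdef
  have hb : 0 ≤ b := by
    rw [hbdef]
    have h1 : (0:ℝ) < K ^ 2 := by positivity
    have h2 : K ^ 2 ≤ (K + 1) ^ 2 := by nlinarith
    have := one_div_le_one_div_of_le h1 h2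
    linarith
  have step1 : ∑ j ∈ Finset.range m, (1 / K ^ 2 - b * ((t j : ℝ) - (K - 1)))
      ≤ ∑ j ∈ Finset.range m, 1 / ((t j : ℝ) + 1) ^ 2 :=
    Finset.sum_le_sum (fun j _ => alloc_pointwise k (t j) hk)
  have step2 : ∑ j ∈ Finset.range m, (1 / K ^ 2 - b * ((t j : ℝ) - (K - 1)))
      = (m : ℝ) / K ^ 2 - b * ((∑ j ∈ Finset.range m, (t j : ℝ)) - (m : ℝ) * (K - 1)) := by
    rw [Finset.sum_sub_distrib, Finset.sum_const, Finset.card_range, ← Finset.mul_sum,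
      Finset.sum_sub_distrib, Finset.sum_const, Finset.card_range, nsmul_eq_mul, nsmul_eq_mul]
    ring
  have hsumcast : (∑ j ∈ Finset.range m, (t j : ℝ)) ≤ (m : ℝ) * (K - 1) + (q : ℝ) := by
    have h1 : ((∑ j ∈ Finset.range m, t j : ℕ) : ℝ) ≤ ((m * (k - 1) + q : ℕ) : ℝ) := by
      exact_mod_cast hsum
    push_cast [Nat.cast_sub hk] at h1
    linarith
  have h2 : (∑ j ∈ Finset.range m, (t j : ℝ)) - (m : ℝ) * (K - 1) ≤ (q : ℝ) := by linarith
  have step3 := sub_le_sub_left (mul_le_mul_of_nonneg_left h2 hb) ((m : ℝ) / K ^ 2)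
  have step4 : (m : ℝ) / K ^ 2 - b * (q : ℝ)
      = (q : ℝ) / (K + 1) ^ 2 + ((m : ℝ) - (q : ℝ)) / K ^ 2 := by
    rw [hbdef]; ring
  linarith

lemma integral_err_grid (s : Finset ℝ) (M : ℕ) (p : ℕ → ℝ)
    (hmem : ∀ i ≤ M, p i ∈ s)
    (hmono : ∀ i < M, p i ≤ p (i + 1))
    (hsep : ∀ i < M, ∀ a ∈ s, a ≤ p i ∨ p (i + 1) ≤ a) :
    ∫ x in (p 0)..(p M), err ↑s x = ∑ i ∈ Finset.range M, (p (i + 1) - p i) ^ 3 / 12 := by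
  have hne : s.Nonempty := ⟨p 0, hmem 0 (Nat.zero_le M)⟩
  rw [← intervalIntegral.sum_integral_adjacent_intervals
    (a := p) (n := M) (fun i _ => intervalIntegrable_err s hne _ _)]
  apply Finset.sum_congr rfl
  intro i hi
  rw [Finset.mem_range] at hi
  exact integral_err_gap s (p i) (p (i + 1)) (hmem i hi.le) (hmem (i + 1) hi)
    (hmono i hi) (hsep i hi)

lemma integral_err_glb (s : Finset ℝ) (m k q : ℕ) (hk : 1 ≤ k) (hq : q ≤ m)
    (h : ℝ) (hh : 0 < h)
    (hmem : ∀ i ≤ m, (i : ℝ) * h ∈ s)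
    (hcount : ∑ j ∈ Finset.range m,
        (s.filter (fun a => a ∈ Ioo ((j : ℝ) * h) (((j : ℝ) + 1) * h))).card
      ≤ m * (k - 1) + q) :
    (q : ℝ) * h ^ 3 / (12 * ((k : ℝ) + 1) ^ 2)
      + ((m : ℝ) - (q : ℝ)) * h ^ 3 / (12 * (k : ℝ) ^ 2)
      ≤ ∫ x in (0 : ℝ)..((m : ℝ) * h), err ↑s x := by
  have hne : s.Nonempty := ⟨0, by simpa using hmem 0 (Nat.zero_le m)⟩
  set p : ℕ → ℝ := fun i => (i : ℝ) * h with hp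
  have hp0 : p 0 = 0 := by simp [hp]
  have h1 : ∫ x in (0 : ℝ)..((m : ℝ) * h), err ↑s x
      = ∑ i ∈ Finset.range m, ∫ x in (p i)..(p (i + 1)), err ↑s x := by
    rw [intervalIntegral.sum_integral_adjacent_intervals
      (a := p) (n := m) (fun i _ => intervalIntegrable_err s hne _ _), hp0]
  set t : ℕ → ℕ := fun j => (s.filter (fun a => a ∈ Ioo ((j : ℝ) * h) (((j : ℝ) + 1) * h))).card
    with ht
  have h2 : ∀ j ∈ Finset.range m,
      h ^ 3 / 12 * (1 / ((t j : ℝ) + 1) ^ 2) ≤ ∫ x in (p j)..(p (j + 1)), err ↑s x := by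
    intro j hj
    rw [Finset.mem_range] at hj
    have hpj1 : p (j + 1) = ((j : ℝ) + 1) * h := by simp only [hp]; push_cast; ring
    have := integral_err_lb (t j) s (p j) (p (j + 1))
      (hmem j hj.le) (hmem (j + 1) hj)
      (by rw [hpj1]; simp only [hp]; nlinarith)
      (by rw [ht, hpj1])
    have he : p (j + 1) - p j = h := by simp [hp]; push_cast; ring
    rw [he] at this
    calc h ^ 3 / 12 * (1 / ((t j : ℝ) + 1) ^ 2) = h ^ 3 / (12 * ((t j : ℝ) + 1) ^ 2) := by
          rw [div_mul_div_comm]; ring_nf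
      _ ≤ _ := this
  have h3 := Finset.sum_le_sum h2
  rw [← Finset.mul_sum] at h3
  have h4 := alloc_sum m k q hk hq t hcount
  have h5 : (0:ℝ) ≤ h ^ 3 / 12 := by positivity
  have h6 := mul_le_mul_of_nonneg_left h4 h5
  rw [h1]
  calc (q : ℝ) * h ^ 3 / (12 * ((k : ℝ) + 1) ^ 2)
        + ((m : ℝ) - (q : ℝ)) * h ^ 3 / (12 * (k : ℝ) ^ 2)
      = h ^ 3 / 12 * ((q : ℝ) / ((k : ℝ) + 1) ^ 2 + ((m : ℝ) - (q : ℝ)) / (k : ℝ) ^ 2) := by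
        field_simp
    _ ≤ h ^ 3 / 12 * ∑ j ∈ Finset.range m, 1 / ((t j : ℝ) + 1) ^ 2 := h6
    _ ≤ _ := h3

set_option maxHeartbeats 2000000 in
lemma key_exact (m k q : ℕ) (hk : 1 ≤ k) (hq0 : 0 < q) (hqm : q < m) (h : ℝ) (hh : 0 < h)
    (G : Set ℝ)
    (hG : G = (fun a : ℕ => (a : ℝ) * (h / ((k : ℝ) + 1))) '' Set.Icc 0 (q * (k + 1))
      ∪ (fun b : ℕ => (q : ℝ) * h + (b : ℝ) * (h / (k : ℝ))) '' Set.Icc 1 ((m - q) * k)) :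
    ∫ x in (0 : ℝ)..((m : ℝ) * h), err G x
      = (q : ℝ) * h ^ 3 / (12 * ((k : ℝ) + 1) ^ 2)
        + ((m : ℝ) - (q : ℝ)) * h ^ 3 / (12 * (k : ℝ) ^ 2) := by
  have hk0 : (0:ℝ) < (k:ℝ) := by exact_mod_cast hk
  have hk1 : (0:ℝ) < (k:ℝ) + 1 := by linarith
  set g₁ : ℝ := h / ((k : ℝ) + 1) with hg₁
  set g₂ : ℝ := h / (k : ℝ) with hg₂
  have hg₁0 : 0 < g₁ := by positivity
  have hg₂0 : 0 < g₂ := by positivity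
  have hfin : G.Finite := by
    rw [hG]
    exact ((Set.finite_Icc _ _).image _).union ((Set.finite_Icc _ _).image _)
  set GF := hfin.toFinset with hGF
  have hcoe : (GF : Set ℝ) = G := hfin.coe_toFinset
  have hmemA : ∀ a : ℕ, a ≤ q * (k + 1) → (a : ℝ) * g₁ ∈ GF := by
    intro a ha
    rw [← Finset.mem_coe, hcoe, hG]
    exact Or.inl ⟨a, Set.mem_Icc.2 ⟨Nat.zero_le _, ha⟩, rfl⟩
  have hmemB : ∀ b : ℕ, 1 ≤ b → b ≤ (m - q) * k → (q : ℝ) * h + (b : ℝ) * g₂ ∈ GF := by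
    intro b hb1 hb2
    rw [← Finset.mem_coe, hcoe, hG]
    exact Or.inr ⟨b, Set.mem_Icc.2 ⟨hb1, hb2⟩, rfl⟩
  have hqh : (q : ℝ) * h = ((q * (k + 1) : ℕ) : ℝ) * g₁ := by
    rw [hg₁]; push_cast; field_simp
  -- every element of G is of one of the two forms
  have helt : ∀ x ∈ GF, (∃ a : ℕ, a ≤ q * (k + 1) ∧ x = (a : ℝ) * g₁) ∨
      (∃ b : ℕ, 1 ≤ b ∧ b ≤ (m - q) * k ∧ x = (q : ℝ) * h + (b : ℝ) * g₂) := by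
    intro x hx
    rw [← Finset.mem_coe, hcoe, hG] at hx
    rcases hx with ⟨a, ha, rfl⟩ | ⟨b, hb, rfl⟩
    · exact Or.inl ⟨a, (Set.mem_Icc.1 ha).2, rfl⟩
    · exact Or.inr ⟨b, (Set.mem_Icc.1 hb).1, (Set.mem_Icc.1 hb).2, rfl⟩
  -- first region
  have hsep1 : ∀ i < q * (k + 1), ∀ a ∈ GF,
      a ≤ (i : ℝ) * g₁ ∨ ((i + 1 : ℕ) : ℝ) * g₁ ≤ a := by
    intro i hi a ha
    rcases helt a ha with ⟨a', ha', rfl⟩ | ⟨b, hb1, hb2, rfl⟩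
    · rcases Nat.lt_or_ge a' (i + 1) with hlt | hge
      · left
        have : (a' : ℝ) ≤ (i : ℝ) := by exact_mod_cast Nat.lt_succ_iff.1 hlt
        nlinarith
      · right
        have : ((i + 1 : ℕ) : ℝ) ≤ (a' : ℝ) := by exact_mod_cast hge
        nlinarith
    · right
      have h1 : ((i + 1 : ℕ) : ℝ) ≤ ((q * (k + 1) : ℕ) : ℝ) := by exact_mod_cast hi
      have h2 : ((q * (k + 1) : ℕ) : ℝ) * g₁ ≤ (q : ℝ) * h + (b : ℝ) * g₂ := by
        rw [← hqh]; nlinarith [(Nat.cast_nonneg b : (0:ℝ) ≤ (b:ℝ))]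
      nlinarith
  have hint1 : ∫ x in (0 : ℝ)..((q : ℝ) * h), err ↑GF x
      = (q * (k + 1) : ℕ) * g₁ ^ 3 / 12 := by
    have key := integral_err_grid GF (q * (k + 1)) (fun i => (i : ℝ) * g₁)
      (fun i hi => hmemA i hi)
      (fun i _ => by
        have : (i : ℝ) ≤ ((i + 1 : ℕ) : ℝ) := by exact_mod_cast Nat.le_succ i
        show (i : ℝ) * g₁ ≤ ((i + 1 : ℕ) : ℝ) * g₁
        nlinarith)
      hsep1
    simp only [Nat.cast_zero, zero_mul] at key
    rw [hqh, key]
    have hterm : ∀ i ∈ Finset.range (q * (k + 1)),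
        (((i + 1 : ℕ) : ℝ) * g₁ - ((i : ℕ) : ℝ) * g₁) ^ 3 / 12 = g₁ ^ 3 / 12 := by
      intro i _
      push_cast
      ring
    rw [Finset.sum_congr rfl hterm, Finset.sum_const, Finset.card_range, nsmul_eq_mul]
    ring
  have hqmR : (q : ℝ) ≤ (m : ℝ) := by exact_mod_cast hqm.le
  have hmh : ((m : ℝ)) * h = (q : ℝ) * h + (((m - q) * k : ℕ) : ℝ) * g₂ := by
    push_cast [Nat.cast_sub hqm.le]
    rw [hg₂]
    field_simp
    ring
  have hmem2 : ∀ i ≤ (m - q) * k, (q : ℝ) * h + (i : ℝ) * g₂ ∈ GF := by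
    intro i hi
    rcases Nat.eq_zero_or_pos i with rfl | hpos
    · simp only [Nat.cast_zero, zero_mul, add_zero]
      rw [hqh]
      exact hmemA _ le_rfl
    · exact hmemB i hpos hi
  have hsep2 : ∀ i < (m - q) * k, ∀ a ∈ GF,
      a ≤ (q : ℝ) * h + (i : ℝ) * g₂ ∨ (q : ℝ) * h + ((i + 1 : ℕ) : ℝ) * g₂ ≤ a := by
    intro i hi a ha
    rcases helt a ha with ⟨a', ha', rfl⟩ | ⟨b, hb1, hb2, rfl⟩
    · left
      have h1 : ((a' : ℕ) : ℝ) ≤ ((q * (k + 1) : ℕ) : ℝ) := by exact_mod_cast ha'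
      have h2 : (a' : ℝ) * g₁ ≤ ((q * (k + 1) : ℕ) : ℝ) * g₁ := by nlinarith
      rw [← hqh] at h2
      nlinarith [(Nat.cast_nonneg i : (0:ℝ) ≤ (i:ℝ))]
    · rcases Nat.lt_or_ge b (i + 1) with hlt | hge
      · left
        have : (b : ℝ) ≤ (i : ℝ) := by exact_mod_cast Nat.lt_succ_iff.1 hlt
        nlinarith
      · right
        have : ((i + 1 : ℕ) : ℝ) ≤ (b : ℝ) := by exact_mod_cast hge
        nlinarith
  have hint2 : ∫ x in ((q : ℝ) * h)..((m : ℝ) * h), err ↑GF x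
      = ((m - q) * k : ℕ) * g₂ ^ 3 / 12 := by
    have key := integral_err_grid GF ((m - q) * k) (fun i => (q : ℝ) * h + (i : ℝ) * g₂)
      (fun i hi => hmem2 i hi)
      (fun i _ => by
        have : (i : ℝ) ≤ ((i + 1 : ℕ) : ℝ) := by exact_mod_cast Nat.le_succ i
        show (q : ℝ) * h + (i : ℝ) * g₂ ≤ (q : ℝ) * h + ((i + 1 : ℕ) : ℝ) * g₂
        nlinarith)
      hsep2
    simp only [Nat.cast_zero, zero_mul, add_zero] at key
    rw [hmh, key]
    have hterm : ∀ i ∈ Finset.range ((m - q) * k),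
        (((q : ℝ) * h + ((i + 1 : ℕ) : ℝ) * g₂) - ((q : ℝ) * h + ((i : ℕ) : ℝ) * g₂)) ^ 3 / 12
          = g₂ ^ 3 / 12 := by
      intro i _
      push_cast
      ring
    rw [Finset.sum_congr rfl hterm, Finset.sum_const, Finset.card_range, nsmul_eq_mul]
    ring
  have hne : GF.Nonempty := ⟨_, hmemA 0 (Nat.zero_le _)⟩
  have hqh0 : (0:ℝ) ≤ (q : ℝ) * h := by positivity
  have htot : ∫ x in (0 : ℝ)..((m : ℝ) * h), err ↑GF x
      = (q * (k + 1) : ℕ) * g₁ ^ 3 / 12 + ((m - q) * k : ℕ) * g₂ ^ 3 / 12 := by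
    rw [← integral_add_adjacent_intervals (intervalIntegrable_err GF hne 0 ((q : ℝ) * h))
      (intervalIntegrable_err GF hne ((q : ℝ) * h) ((m : ℝ) * h)), hint1, hint2]
  have herr : ∀ x : ℝ, err G x = err ↑GF x := by intro x; rw [hcoe]
  rw [intervalIntegral.integral_congr (fun x _ => herr x), htot]
  push_cast [Nat.cast_sub hqm.le]
  rw [hg₁, hg₂]
  field_simp

set_option maxHeartbeats 2000000 in
lemma gamma_eq (m k q : ℕ) (hk : 1 ≤ k) (hq0 : 0 < q) (hqm : q < m)
    (r s : ℝ) (hr : 0 < r) (hs : 0 < s) (c : ℕ → ℝ)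
    (hc : ∀ j : ℕ, c j = 2 * ((j : ℝ) - 1) * r * s) :
    ((⋃ j ∈ Set.Icc 1 q,
        (fun i : ℕ => c j + 2 * ((i : ℝ) - 1) * r * s / ((k : ℝ) + 1)) '' Set.Icc 1 (k + 2))
      ∪ (⋃ j ∈ Set.Icc (q + 1) m,
        (fun i : ℕ => c j + 2 * ((i : ℝ) - 1) * r * s / (k : ℝ)) '' Set.Icc 1 (k + 1)))
    = (fun a : ℕ => (a : ℝ) * ((2 * r * s) / ((k : ℝ) + 1))) '' Set.Icc 0 (q * (k + 1))
      ∪ (fun b : ℕ => (q : ℝ) * (2 * r * s) + (b : ℝ) * ((2 * r * s) / (k : ℝ)))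
          '' Set.Icc 1 ((m - q) * k) := by
  have hk0 : (0:ℝ) < (k:ℝ) := by exact_mod_cast hk
  have hk1 : (0:ℝ) < (k:ℝ) + 1 := by linarith
  ext x
  simp only [Set.mem_union, Set.mem_iUnion, Set.mem_image, Set.mem_Icc, exists_prop]
  constructor
  · rintro (⟨j, ⟨hj1, hj2⟩, i, ⟨hi1, hi2⟩, rfl⟩ | ⟨j, ⟨hj1, hj2⟩, i, ⟨hi1, hi2⟩, rfl⟩)
    · -- first family into A
      left
      refine ⟨(j - 1) * (k + 1) + (i - 1), ⟨Nat.zero_le _, ?_⟩, ?_⟩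
      · have h1 : (j - 1) * (k + 1) ≤ (q - 1) * (k + 1) :=
          Nat.mul_le_mul_right _ (by omega)
        have h2 : (q - 1) * (k + 1) + (k + 1) = q * (k + 1) := by
          rw [← Nat.succ_mul]
          congr 1
          omega
        omega
      · have hj : ((j - 1 : ℕ) : ℝ) = (j : ℝ) - 1 := by
          rw [Nat.cast_sub hj1]; simp
        have hi : ((i - 1 : ℕ) : ℝ) = (i : ℝ) - 1 := by
          rw [Nat.cast_sub hi1]; simp
        push_cast [hj, hi]
        rw [hc j]
        field_simp
    · -- second family
      rcases Nat.eq_zero_or_pos ((j - 1 - q) * k + (i - 1)) with hb0 | hbpos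
      · -- degenerate corner: x = c (q+1), goes into A with a = q(k+1)
        left
        have hj' : j = q + 1 := by
          rcases Nat.eq_zero_of_add_eq_zero_right hb0 with h'
          have := Nat.eq_zero_of_add_eq_zero_left hb0
          rcases Nat.mul_eq_zero.1 h' with h'' | h''
          · omega
          · omega
        have hi' : i = 1 := by omega
        refine ⟨q * (k + 1), ⟨Nat.zero_le _, le_rfl⟩, ?_⟩
        subst hj' hi'
        rw [hc]
        push_cast
        field_simp
        ring
      · right
        refine ⟨(j - 1 - q) * k + (i - 1), ⟨hbpos, ?_⟩, ?_⟩
        · have h1 : (j - 1 - q) * k ≤ (m - 1 - q) * k :=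
            Nat.mul_le_mul_right _ (by omega)
          have h2 : (m - 1 - q) * k + k = (m - q) * k := by
            rw [← Nat.succ_mul]
            congr 1
            omega
          omega
        · have hj' : ((j - 1 - q : ℕ) : ℝ) = (j : ℝ) - 1 - (q : ℝ) := by
            rw [Nat.cast_sub (by omega : q ≤ j - 1), Nat.cast_sub (by omega : 1 ≤ j)]
            push_cast
            ring
          have hi' : ((i - 1 : ℕ) : ℝ) = (i : ℝ) - 1 := by
            rw [Nat.cast_sub hi1]; simp
          push_cast [hj', hi']
          rw [hc j]
          field_simp
          ring
  · rintro (⟨a, ⟨-, ha2⟩, rfl⟩ | ⟨b, ⟨hb1, hb2⟩, rfl⟩)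
    · -- A into the union
      rcases Nat.lt_or_ge (a / (k + 1)) q with hlt | hge
      · left
        obtain ⟨d, hd⟩ : ∃ d, d = a / (k + 1) := ⟨_, rfl⟩
        obtain ⟨e, he⟩ : ∃ e, e = a % (k + 1) := ⟨_, rfl⟩
        have hmod : e < k + 1 := he ▸ Nat.mod_lt _ (by omega)
        have hdm : (k + 1) * d + e = a := by rw [hd, he]; exact Nat.div_add_mod a (k + 1)
        rw [← hd] at hlt
        refine ⟨d + 1, ⟨by omega, by omega⟩, e + 1, ⟨by omega, by omega⟩, ?_⟩
        have hcast : ((k : ℝ) + 1) * (d : ℝ) + (e : ℝ) = (a : ℝ) := by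
          exact_mod_cast congrArg (Nat.cast : ℕ → ℝ) hdm
        rw [hc]
        push_cast
        field_simp
        linear_combination hcast
      · -- a = q * (k + 1)
        have ha : a = q * (k + 1) := by
          have := Nat.le_div_iff_mul_le (by omega : 0 < k + 1) |>.1 hge
          omega
        left
        refine ⟨q, ⟨hq0, le_rfl⟩, k + 2, ⟨by omega, le_rfl⟩, ?_⟩
        subst ha
        rw [hc]
        push_cast
        field_simp
        ring
    · -- B into the union
      right
      have hk0' : 0 < k := hk
      obtain ⟨d, hd'⟩ : ∃ d, d = (b - 1) / k := ⟨_, rfl⟩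
      obtain ⟨e, he'⟩ : ∃ e, e = (b - 1) % k := ⟨_, rfl⟩
      have hd : d < m - q := by
        rw [hd', Nat.div_lt_iff_lt_mul hk0']
        omega
      have he : e < k := he' ▸ Nat.mod_lt _ hk0'
      have hdm : k * d + e = b - 1 := by rw [hd', he']; exact Nat.div_add_mod (b - 1) k
      have hdm' : k * d + e + 1 = b := by omega
      refine ⟨q + 1 + d, ⟨by omega, by omega⟩, e + 2, ⟨by omega, by omega⟩, ?_⟩
      have hcast : (k : ℝ) * (d : ℝ) + (e : ℝ) + 1 = (b : ℝ) := by
        exact_mod_cast congrArg (Nat.cast : ℕ → ℝ) hdm'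
      rw [hc]
      push_cast
      field_simp
      linear_combination hcast

lemma distortion_uniformOn (L : ℝ) (hL : 0 < L) (S : Set ℝ) :
    distortion (uniformOn 0 L) S = L⁻¹ * ∫ x in (0 : ℝ)..L, err S x := by
  rw [distortion, uniformOn, MeasureTheory.integral_smul_measure]
  have h1 : ((ENNReal.ofReal (L - 0))⁻¹).toReal = L⁻¹ := by
    rw [ENNReal.toReal_inv, ENNReal.toReal_ofReal (by linarith)]
    norm_num
  rw [h1, smul_eq_mul]
  congr 1
  rw [intervalIntegral.integral_of_le hL.le, ← integral_Icc_eq_integral_Ioc]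
  rfl

lemma ncard_Icc_nat (a b : ℕ) : (Set.Icc a b).ncard = b + 1 - a := by
  rw [← Finset.coe_Icc, Set.ncard_coe_finset, Nat.card_Icc]

set_option maxHeartbeats 4000000 in
/-- Proposition 4.4 (case `0 < q < m`): for `n = mk + 1 + q`, the `n`-th conditional
quantization error of the uniform distribution on `[0, 2mr sin(π/m)]` with respect to
`{c_j : 1 ≤ j ≤ m+1}`, `c_j = 2(j-1)r sin(π/m)`, equals
`r²q sin²(π/m)/(3m(k+1)²) + r²(m-q) sin²(π/m)/(3mk²)`, attained by the stated set. -/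
theorem stmt14 (m : ℕ) (hm : 3 ≤ m) (r : ℝ) (hr : 0 < r) (k q : ℕ) (hk : 1 ≤ k)
    (hq0 : 0 < q) (hqm : q < m) (n : ℕ) (hn : n = m * k + 1 + q)
    (c : ℕ → ℝ) (hc : ∀ j : ℕ, c j = 2 * ((j : ℝ) - 1) * r * Real.sin (Real.pi / m)) :
    condQuantError (uniformOn 0 (2 * m * r * Real.sin (Real.pi / m)))
        (c '' Set.Icc 1 (m + 1)) n
      = r ^ 2 * q * Real.sin (Real.pi / m) ^ 2 / (3 * m * ((k : ℝ) + 1) ^ 2)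
        + r ^ 2 * ((m : ℝ) - q) * Real.sin (Real.pi / m) ^ 2 / (3 * m * (k : ℝ) ^ 2)
    ∧ distortion (uniformOn 0 (2 * m * r * Real.sin (Real.pi / m)))
        ((⋃ j ∈ Set.Icc 1 q,
            (fun i : ℕ =>
              c j + 2 * ((i : ℝ) - 1) * r * Real.sin (Real.pi / m) / ((k : ℝ) + 1)) ''
              Set.Icc 1 (k + 2))
          ∪ (⋃ j ∈ Set.Icc (q + 1) m,
              (fun i : ℕ =>
                c j + 2 * ((i : ℝ) - 1) * r * Real.sin (Real.pi / m) / (k : ℝ)) ''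
                Set.Icc 1 (k + 1)))
      = r ^ 2 * q * Real.sin (Real.pi / m) ^ 2 / (3 * m * ((k : ℝ) + 1) ^ 2)
        + r ^ 2 * ((m : ℝ) - q) * Real.sin (Real.pi / m) ^ 2 / (3 * m * (k : ℝ) ^ 2) := by
  have hmR : (3 : ℝ) ≤ (m : ℝ) := by exact_mod_cast hm
  have hm0 : (0 : ℝ) < (m : ℝ) := by linarith
  have hs : 0 < Real.sin (Real.pi / m) := by
    apply Real.sin_pos_of_pos_of_lt_pi
    · positivity
    · apply div_lt_self Real.pi_pos
      linarith
  set s := Real.sin (Real.pi / m) with hsdef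
  have hk0 : (0 : ℝ) < (k : ℝ) := by exact_mod_cast hk
  have hq0R : (0 : ℝ) < (q : ℝ) := by exact_mod_cast hq0
  have hqmR : (q : ℝ) < (m : ℝ) := by exact_mod_cast hqm
  set L := 2 * (m : ℝ) * r * s with hLdef
  have hL : 0 < L := by positivity
  have hLmh : L = (m : ℝ) * (2 * r * s) := by rw [hLdef]; ring
  have hh : (0 : ℝ) < 2 * r * s := by positivity
  set V := r ^ 2 * (q : ℝ) * s ^ 2 / (3 * (m : ℝ) * ((k : ℝ) + 1) ^ 2)
    + r ^ 2 * ((m : ℝ) - (q : ℝ)) * s ^ 2 / (3 * (m : ℝ) * (k : ℝ) ^ 2) with hVdef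
  have harith : L⁻¹ * ((q : ℝ) * (2 * r * s) ^ 3 / (12 * ((k : ℝ) + 1) ^ 2)
      + ((m : ℝ) - (q : ℝ)) * (2 * r * s) ^ 3 / (12 * (k : ℝ) ^ 2)) = V := by
    rw [hVdef, hLdef]
    field_simp
    ring
  set β := c '' Set.Icc 1 (m + 1) with hβdef
  have hβfin : β.Finite := (Set.finite_Icc _ _).image _
  set Γ : Set ℝ := ((⋃ j ∈ Set.Icc 1 q,
        (fun i : ℕ => c j + 2 * ((i : ℝ) - 1) * r * s / ((k : ℝ) + 1)) '' Set.Icc 1 (k + 2))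
      ∪ (⋃ j ∈ Set.Icc (q + 1) m,
        (fun i : ℕ => c j + 2 * ((i : ℝ) - 1) * r * s / (k : ℝ)) '' Set.Icc 1 (k + 1)))
    with hΓdef
  have hγG := gamma_eq m k q hk hq0 hqm r s hr hs c hc
  rw [← hΓdef] at hγG
  have hΓfin : Γ.Finite := by
    rw [hγG]
    exact ((Set.finite_Icc _ _).image _).union ((Set.finite_Icc _ _).image _)
  have hdistΓ : distortion (uniformOn 0 L) Γ = V := by
    rw [distortion_uniformOn L hL, hLmh,
      key_exact m k q hk hq0 hqm (2 * r * s) hh Γ hγG, ← hLmh]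
    exact harith
  -- cardinality of β
  have hcinj : Function.Injective c := by
    intro a b hab
    rw [hc a, hc b] at hab
    have h2 : ((a : ℝ) - 1) * (2 * r * s) = ((b : ℝ) - 1) * (2 * r * s) := by
      linear_combination hab
    have h3 := mul_right_cancel₀ (ne_of_gt hh) h2
    have h4 : (a : ℝ) = (b : ℝ) := by linarith
    exact_mod_cast h4
  have hβcard : β.ncard = m + 1 := by
    rw [hβdef, Set.ncard_image_of_injective _ hcinj, _root_.ncard_Icc_nat]
    omega
  have hmk : m * (k - 1) + m = m * k := by
    have h1 : m * ((k - 1) + 1) = m * (k - 1) + m := Nat.mul_succ m (k - 1)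
    rw [← h1]
    congr 1
    omega
  have hNcard : n - β.ncard = m * (k - 1) + q := by
    rw [hβcard]
    omega
  -- β grid description
  have hβmem : ∀ i : ℕ, i ≤ m → ((i : ℝ) * (2 * r * s)) ∈ β := by
    intro i hi
    exact ⟨i + 1, Set.mem_Icc.2 ⟨by omega, by omega⟩, by rw [hc]; push_cast; ring⟩
  have hβelt : ∀ x ∈ β, ∃ i : ℕ, i ≤ m ∧ x = (i : ℝ) * (2 * r * s) := by
    rintro x ⟨j, hj, rfl⟩
    rw [Set.mem_Icc] at hj
    refine ⟨j - 1, by omega, ?_⟩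
    rw [hc, Nat.cast_sub hj.1]
    push_cast
    ring
  -- β ⊆ Γ
  have hβγ : β ⊆ Γ := by
    intro x hx
    obtain ⟨i, hi, rfl⟩ := hβelt x hx
    rw [hγG]
    rcases le_or_gt i q with hiq | hiq
    · left
      refine ⟨i * (k + 1), Set.mem_Icc.2 ⟨Nat.zero_le _, Nat.mul_le_mul_right _ hiq⟩, ?_⟩
      push_cast
      field_simp
    · right
      refine ⟨(i - q) * k, Set.mem_Icc.2 ⟨?_, Nat.mul_le_mul_right _ (by omega)⟩, ?_⟩
      · have : 1 ≤ i - q := by omega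
        calc 1 = 1 * 1 := by ring
          _ ≤ (i - q) * k := Nat.mul_le_mul this hk
      · show (q : ℝ) * (2 * r * s) + (((i - q) * k : ℕ) : ℝ) * (2 * r * s / (k : ℝ))
            = (i : ℝ) * (2 * r * s)
        push_cast [Nat.cast_sub hiq.le]
        field_simp
        ring
  -- cardinality of Γ
  have hΓcard : Γ.ncard ≤ n := by
    rw [hγG]
    have h1 := Set.ncard_union_le
      ((fun a : ℕ => (a : ℝ) * ((2 * r * s) / ((k : ℝ) + 1))) '' Set.Icc 0 (q * (k + 1)))
      ((fun b : ℕ => (q : ℝ) * (2 * r * s) + (b : ℝ) * ((2 * r * s) / (k : ℝ)))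
        '' Set.Icc 1 ((m - q) * k))
    have h2 := Set.ncard_image_le (f := fun a : ℕ => (a : ℝ) * ((2 * r * s) / ((k : ℝ) + 1)))
      (Set.finite_Icc 0 (q * (k + 1)))
    have h3 := Set.ncard_image_le
      (f := fun b : ℕ => (q : ℝ) * (2 * r * s) + (b : ℝ) * ((2 * r * s) / (k : ℝ)))
      (Set.finite_Icc 1 ((m - q) * k))
    rw [_root_.ncard_Icc_nat] at h2
    rw [_root_.ncard_Icc_nat] at h3
    have e1 : q * (k + 1) = q * k + q := by ring
    have e2 : (m - q) * k + q * k = m * k := by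
      rw [← Nat.add_mul]
      congr 1
      omega
    omega
  -- membership of V in the distortion-value set
  have hmem : V ∈ { v : ℝ | ∃ α : Set ℝ, α.Finite ∧ α.ncard ≤ n - β.ncard
      ∧ v = distortion (uniformOn 0 L) (α ∪ β) } := by
    refine ⟨Γ \ β, hΓfin.diff, ?_, ?_⟩
    · rw [Set.ncard_diff hβγ hβfin]
      exact Nat.sub_le_sub_right hΓcard _
    · rw [Set.diff_union_of_subset hβγ, hdistΓ]
  -- lower bound
  have hlb : ∀ v ∈ { v : ℝ | ∃ α : Set ℝ, α.Finite ∧ α.ncard ≤ n - β.ncard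
      ∧ v = distortion (uniformOn 0 L) (α ∪ β) }, V ≤ v := by
    rintro v ⟨α, hαfin, hαcard, rfl⟩
    have hSfin : (α ∪ β).Finite := hαfin.union hβfin
    set SF := hSfin.toFinset with hSFdef
    have hScoe : (SF : Set ℝ) = α ∪ β := hSfin.coe_toFinset
    have hmemS : ∀ i : ℕ, i ≤ m → ((i : ℝ) * (2 * r * s)) ∈ SF := by
      intro i hi
      rw [← Finset.mem_coe, hScoe]
      exact Or.inr (hβmem i hi)
    set αF := hαfin.toFinset with hαFdef
    have hαcard' : αF.card ≤ m * (k - 1) + q := by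
      rw [← Set.ncard_eq_toFinset_card α hαfin]
      rw [hNcard] at hαcard
      exact hαcard
    set F : ℕ → Finset ℝ := fun j => SF.filter
      (fun a => a ∈ Ioo ((j : ℝ) * (2 * r * s)) (((j : ℝ) + 1) * (2 * r * s))) with hFdef
    have hFsub : ∀ j, F j ⊆ αF := by
      intro j x hx
      rw [hFdef] at hx
      simp only [Finset.mem_filter, Set.mem_Ioo] at hx
      obtain ⟨hxS, hx1, hx2⟩ := hx
      rw [← Finset.mem_coe, hScoe] at hxS
      rcases hxS with hxα | hxβ
      · rw [hαFdef, Set.Finite.mem_toFinset]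
        exact hxα
      · exfalso
        obtain ⟨i, hi, rfl⟩ := hβelt x hxβ
        have h1 : (j : ℝ) < (i : ℝ) := (mul_lt_mul_iff_left₀ hh).1 hx1
        have h2 : (i : ℝ) < (j : ℝ) + 1 := (mul_lt_mul_iff_left₀ hh).1 hx2
        have h1' : j < i := by exact_mod_cast h1
        have h2' : i < j + 1 := by exact_mod_cast h2
        omega
    have hFdisj : ∀ x ∈ Finset.range m, ∀ y ∈ Finset.range m, x ≠ y → Disjoint (F x) (F y) := by
      intro x _ y _ hxy
      rw [Finset.disjoint_left]
      intro a hax hay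
      rw [hFdef] at hax hay
      simp only [Finset.mem_filter, Set.mem_Ioo] at hax hay
      obtain ⟨-, hx1, hx2⟩ := hax
      obtain ⟨-, hy1, hy2⟩ := hay
      rcases Nat.lt_or_ge x y with hlt | hge
      · have hxy1 : (x : ℝ) + 1 ≤ (y : ℝ) := by exact_mod_cast hlt
        nlinarith
      · have hlt : y < x := by omega
        have hxy1 : (y : ℝ) + 1 ≤ (x : ℝ) := by exact_mod_cast hlt
        nlinarith
    have hcount : ∑ j ∈ Finset.range m,
        (SF.filter (fun a => a ∈ Ioo ((j : ℝ) * (2 * r * s)) (((j : ℝ) + 1) * (2 * r * s)))).card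
        ≤ m * (k - 1) + q := by
      calc ∑ j ∈ Finset.range m, (F j).card
          = ((Finset.range m).biUnion F).card := (Finset.card_biUnion hFdisj).symm
        _ ≤ αF.card := Finset.card_le_card (Finset.biUnion_subset.2 (fun j _ => hFsub j))
        _ ≤ m * (k - 1) + q := hαcard'
    have hint := integral_err_glb SF m k q hk hqm.le (2 * r * s) hh hmemS hcount
    rw [distortion_uniformOn L hL]
    calc V = L⁻¹ * ((q : ℝ) * (2 * r * s) ^ 3 / (12 * ((k : ℝ) + 1) ^ 2)
          + ((m : ℝ) - (q : ℝ)) * (2 * r * s) ^ 3 / (12 * (k : ℝ) ^ 2)) := harith.symm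
      _ ≤ L⁻¹ * ∫ x in (0 : ℝ)..((m : ℝ) * (2 * r * s)), err ↑SF x :=
          mul_le_mul_of_nonneg_left hint (inv_nonneg.2 hL.le)
      _ = L⁻¹ * ∫ x in (0 : ℝ)..L, err (α ∪ β) x := by
          rw [hLmh]
          congr 1
          exact intervalIntegral.integral_congr (fun x _ => by rw [hScoe])
  constructor
  · rw [condQuantError]
    exact le_antisymm (csInf_le ⟨V, fun v hv => hlb v hv⟩ hmem) (le_csInf ⟨V, hmem⟩ hlb)
  · exact hdistΓ
end

section
/- Let r > 0 and n ∈ ℕ with n ≥ 1. Then (n/(2π)) · ∫_{−π/n}^{π/n} ((r cos θ − r)² + (r sin θ)²) dθ = 2r²(1 − (n/π)·sin(π/n)). -/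
open MeasureTheory Real

/-- The distortion error contributed by the point `(r, 0)` in its Voronoi region for the
uniform distribution on the circle of radius `r`, when `n` points are placed at the scaled
`n`-th roots of unity:
`(n/(2π)) ∫_{-π/n}^{π/n} ((r cos θ - r)² + (r sin θ)²) dθ = 2r²(1 - (n/π) sin(π/n))`. -/
theorem stmt19 (r : ℝ) (hr : 0 < r) (n : ℕ) (hn : 1 ≤ n) :
    (n : ℝ) / (2 * Real.pi) *
        ∫ θ in (-(Real.pi / n))..(Real.pi / n),
          ((r * Real.cos θ - r) ^ 2 + (r * Real.sin θ) ^ 2)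
      = 2 * r ^ 2 * (1 - (n : ℝ) / Real.pi * Real.sin (Real.pi / n)) := by
  have key : ∀ θ : ℝ, (r * Real.cos θ - r) ^ 2 + (r * Real.sin θ) ^ 2
      = 2 * r ^ 2 - 2 * r ^ 2 * Real.cos θ := by
    intro θ; nlinarith [Real.sin_sq_add_cos_sq θ]
  simp_rw [key]
  rw [intervalIntegral.integral_sub (intervalIntegrable_const)
    ((intervalIntegral.intervalIntegrable_cos).const_mul _),
    intervalIntegral.integral_const, intervalIntegral.integral_const_mul,
    integral_cos]
  have hn0 : (n : ℝ) ≠ 0 := by positivity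
  have hpi : Real.pi ≠ 0 := Real.pi_ne_zero
  rw [Real.sin_neg]
  field_simp
  linear_combination (4 * r ^ 2 * Real.pi) * (mul_inv_cancel₀ hn0)
end
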